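/- arXiv:2505.06094 — 3 statements merged into one kernel-verified Lean document; each statement's English description precedes it below -/
import Mathlib

section
/- Let u_n be defined by u_1 = 1, u_2 = 2, and u_n = (1/2)·∑_{k=1}^{n−1} C(n,k)·u_k·u_{n−k} for n ≥ 3 (equivalently 2u_n = ∑_{k=1}^{n-1} binom(n,k) u_k u_{n-k} for n ≥ 3). Then the exponential generating function ∑_{n≥1} u_n x^n/n! equals 1 − √(1 − 2x − x²) as formal power series. -/
/-- let `u₁ = 1`, `u₂ = 2` and `2 uₙ = ∑_{k=1}^{n−1} C(n,k) u_k u_{n−k}`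
for `n ≥ 3` (and `u₀ = 0`).  Then the exponential generating function
`F = ∑_{n≥1} uₙ xⁿ/n!` equals `1 − √(1 − 2x − x²)` as a formal power series, i.e. `F`
is the power series with zero constant term satisfying `F² − 2F + 2x + x² = 0`. -/
theorem stmt_11 (u : ℕ → ℚ) (h0 : u 0 = 0) (h1 : u 1 = 1) (h2 : u 2 = 2)
    (hrec : ∀ n, 3 ≤ n →
      2 * u n = ∑ k ∈ Finset.Ioo 0 n, (n.choose k : ℚ) * u k * u (n - k)) :
    (PowerSeries.mk fun n => u n / n.factorial) ^ 2
        - 2 * (PowerSeries.mk fun n => u n / n.factorial)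
        + (2 * PowerSeries.X + PowerSeries.X ^ 2) = (0 : PowerSeries ℚ) := by
  have key : ∀ n : ℕ, 3 ≤ n →
      (∑ p ∈ Finset.HasAntidiagonal.antidiagonal n,
        (u p.1 / p.1.factorial) * (u p.2 / p.2.factorial)) = 2 * u n / n.factorial := by
    intro n hn
    rw [Finset.Nat.sum_antidiagonal_eq_sum_range_succ_mk]
    have hterm : ∀ k ∈ Finset.range (n + 1),
        (u k / k.factorial) * (u (n - k) / (n - k).factorial)
          = (n.choose k : ℚ) * u k * u (n - k) / n.factorial := by
      intro k hk
      simp only [Finset.mem_range, Nat.lt_succ_iff] at hk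
      have hcast : ((n.choose k : ℚ)) * k.factorial * (n - k).factorial = n.factorial := by
        exact_mod_cast congrArg (Nat.cast : ℕ → ℚ)
          (Nat.choose_mul_factorial_mul_factorial hk)
      have f1 : (k.factorial : ℚ) ≠ 0 := Nat.cast_ne_zero.2 (Nat.factorial_ne_zero k)
      have f2 : ((n - k).factorial : ℚ) ≠ 0 := Nat.cast_ne_zero.2 (Nat.factorial_ne_zero _)
      have f3 : (n.factorial : ℚ) ≠ 0 := Nat.cast_ne_zero.2 (Nat.factorial_ne_zero n)
      field_simp
      linear_combination (-(u k * u (n - k))) * hcast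
    rw [Finset.sum_congr rfl hterm]
    have hsub : Finset.Ioo 0 n ⊆ Finset.range (n + 1) := by
      intro k hk
      simp only [Finset.mem_Ioo] at hk
      exact Finset.mem_range.2 (by omega)
    rw [← Finset.sum_subset hsub, ← Finset.sum_div, ← hrec n hn]
    intro k hk hk'
    simp only [Finset.mem_range, Nat.lt_succ_iff] at hk
    simp only [Finset.mem_Ioo] at hk'
    have : k = 0 ∨ k = n := by omega
    rcases this with rfl | rfl
    · simp [h0]
    · simp [h0]
  ext n
  rw [pow_two]
  simp only [map_add, map_sub, two_mul, PowerSeries.coeff_mul, PowerSeries.coeff_mk,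
    PowerSeries.coeff_X, PowerSeries.coeff_X_pow, map_zero, map_add]
  match n, h0, h1, h2 with
  | 0, h0, h1, h2 => simp [h0]
  | 1, h0, h1, h2 =>
    rw [Finset.Nat.sum_antidiagonal_eq_sum_range_succ_mk]
    norm_num [Finset.sum_range_succ, h0, h1]
  | 2, h0, h1, h2 =>
    rw [Finset.Nat.sum_antidiagonal_eq_sum_range_succ_mk]
    norm_num [Finset.sum_range_succ, h0, h1, h2]
  | (m + 3), h0, h1, h2 =>
    rw [key (m + 3) (by omega), if_neg (by omega : ¬(m + 3 = 1)),
      if_neg (by omega : ¬(m + 3 = 2))]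
    ring
end

section
/- Let f: P → Q be a monotone map of finite posets and let y ∈ Q. Suppose strict chains in P map to strict chains under f only when f is strictly increasing on them; consider the pullback on chains defined by f*[y_0 < ⋯ < y_n] = ∑ over all strict chains x_0 < ⋯ < x_n in P with f(x_i) = y_i. Then for a strict chain γ in Q through y at position m (y_m = y), pulling back γ and then splitting each resulting chain of P at its element above y agrees with first splitting γ at y, pulling back the two halves to P_{≤x} and P_{≥x} for each x ∈ f^{-1}(y), and concatenating: i.e., the concatenation of pullbacks equals the pullback of the concatenation, summed over x ∈ f^{-1}({y}). -/
/-- compatibility of the chain-level pullback with concatenation.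
Let `f : P → Q` be a monotone map of finite posets, `y ∈ Q`, and let `γ` be a strict
chain in `Q` (a list with `List.Chain' (· < ·)`) with `γ_m = y`.  The pullback of a chain
is the formal sum of all strict chains mapping to it pointwise; the identity of formal
sums `f^* ∘ μ_y = (⊕_{x ∈ f^{-1}(y)} μ_x) ∘ (⊕_x f_{≤x}^* ⊗ f_{≥x}^*)` is expressed as:
a strict chain `c` in `P` maps pointwise to `γ` if and only if there is a unique triple
`(x, c₁, c₂)` with `f x = y`, `c₁` a strict chain in `P_{≤x}` ending at `x` mapping to
`γ.take (m+1)`, `c₂` a strict chain in `P_{≥x}` starting at `x` mapping to `γ.drop m`,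
whose concatenation is `c`. -/
theorem stmt_16 {P Q : Type*} [PartialOrder P] [PartialOrder Q] [Fintype P] [Fintype Q]
    (f : P → Q) (hf : Monotone f) (y : Q) (γ : List Q) (m : ℕ)
    (hγ : γ.Chain' (· < ·)) (hm : γ[m]? = some y) :
    ∀ c : List P,
      (c.Chain' (· < ·) ∧ c.map f = γ) ↔
      ∃! t : P × List P × List P,
        f t.1 = y ∧
        t.2.1.Chain' (· < ·) ∧ t.2.2.Chain' (· < ·) ∧
        t.2.1.map f = γ.take (m + 1) ∧ t.2.2.map f = γ.drop m ∧
        t.2.1.getLast? = some t.1 ∧ t.2.2.head? = some t.1 ∧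
        (∀ z ∈ t.2.1, z ≤ t.1) ∧ (∀ z ∈ t.2.2, t.1 ≤ z) ∧
        c = t.2.1 ++ t.2.2.tail := by
  have hmlt : m < γ.length := by
    by_contra h
    rw [List.getElem?_eq_none (le_of_not_gt h)] at hm
    simp at hm
  intro l
  constructor
  · rintro ⟨hc, hmap⟩
    have hlen : l.length = γ.length := by rw [← hmap, List.length_map]
    have hmc : m < l.length := hlen ▸ hmlt
    set x : P := l.get ⟨m, hmc⟩ with hxdef
    have hxe : l[m]'hmc = x := rfl
    have hfx : f x = y := by
      have h1 : (l.map f)[m]? = some y := by rw [hmap]; exact hm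
      rw [List.getElem?_map, List.getElem?_eq_getElem hmc] at h1
      simpa [hxe] using h1
    have hlast : (l.take (m + 1)).getLast? = some x := by
      have hlen' : (l.take (m + 1)).length = m + 1 := by
        simp [List.length_take, Nat.min_eq_left (Nat.succ_le_of_lt hmc)]
      rw [List.getLast?_eq_getElem?, hlen', Nat.add_sub_cancel,
        List.getElem?_take_of_succ, List.getElem?_eq_getElem hmc]
      exact congrArg some hxe
    have hdropm : l.drop m = x :: l.drop (m + 1) := List.drop_eq_getElem_cons hmc
    have hpw : l.Pairwise (· < ·) := List.isChain_iff_pairwise.mp hc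
    refine ⟨⟨x, l.take (m + 1), l.drop m⟩, ⟨hfx, hc.take _, hc.drop _, ?_, ?_, hlast,
      ?_, ?_, ?_, ?_⟩, ?_⟩
    · show (l.take (m + 1)).map f = _
      rw [List.map_take, hmap]
    · show (l.drop m).map f = _
      rw [List.map_drop, hmap]
    · show (l.drop m).head? = some x
      rw [hdropm]; rfl
    · intro z hz
      obtain ⟨i, hi, rfl⟩ := List.getElem_of_mem hz
      have hi' : i < m + 1 := lt_of_lt_of_le hi (by simp [List.length_take])
      show (l.take (m+1))[i] ≤ x
      rw [List.getElem_take]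
      rcases Nat.lt_succ_iff_lt_or_eq.mp hi' with h | h
      · exact le_of_lt ((List.pairwise_iff_getElem.mp hpw) i m _ hmc h)
      · subst h; exact le_of_eq hxe
    · intro z hz
      obtain ⟨i, hi, rfl⟩ := List.getElem_of_mem hz
      show x ≤ (l.drop m)[i]
      rw [List.getElem_drop]
      rcases Nat.eq_zero_or_pos i with h | h
      · subst h
        exact le_of_eq (by simpa using hxe.symm)
      · refine le_of_lt ((List.pairwise_iff_getElem.mp hpw) m (m + i) hmc ?_ (by omega))
        have : i < l.length - m := by simpa [List.length_drop] using hi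
        omega
    · show l = l.take (m+1) ++ (l.drop m).tail
      rw [List.tail_drop]; exact (List.take_append_drop _ _).symm
    · rintro ⟨x', c₁, c₂⟩ ⟨hfx', h1, h2, hm1, hm2, hl, hh, _, _, hcat⟩
      have hlen1 : c₁.length = m + 1 := by
        have := congrArg List.length hm1
        simpa [Nat.min_eq_left (Nat.succ_le_of_lt hmlt)] using this
      have hc1 : c₁ = l.take (m + 1) := by
        rw [hcat, List.take_left' hlen1]
      have ht : c₂.tail = l.drop (m + 1) := by
        rw [hcat, List.drop_left' hlen1]
      have hx' : x' = x := by
        rw [hc1, hlast] at hl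
        exact (Option.some_inj.mp hl).symm
      obtain ⟨a, t, rfl⟩ : ∃ a t, c₂ = a :: t := by
        cases c₂ with
        | nil => simp at hh
        | cons a t => exact ⟨a, t, rfl⟩
      have ha : a = x' := Option.some_inj.mp hh
      have ht' : t = l.drop (m + 1) := by simpa using ht
      have hc2 : a :: t = l.drop m := by
        rw [hdropm, ha, hx', ht']
      simp only [Prod.mk.injEq]
      exact ⟨hx', hc1, hc2⟩
  · rintro ⟨⟨x, c₁, c₂⟩, ⟨hfx, h1, h2, hm1, hm2, hl, hh, _, _, hcat⟩, -⟩
    obtain ⟨a, t, rfl⟩ : ∃ a t, c₂ = a :: t := by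
      cases c₂ with
      | nil => simp at hh
      | cons a t => exact ⟨a, t, rfl⟩
    have ha : a = x := Option.some_inj.mp hh
    constructor
    · rw [hcat]
      refine h1.append (h2.tail) ?_
      intro u hu v hv
      rw [hl] at hu
      obtain rfl : x = u := by simpa using hu
      simp only [List.tail_cons] at hv
      obtain ⟨b, t', rfl⟩ : ∃ b t', t = b :: t' := by
        cases t with
        | nil => simp at hv
        | cons b t' => exact ⟨b, t', rfl⟩
      obtain rfl : b = v := by simpa using hv
      subst ha
      exact (List.isChain_cons.mp h2).1 _ rfl
    · have htail : t.map f = γ.drop (m + 1) := by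
        have := congrArg List.tail hm2
        simpa [List.tail_drop] using this
      rw [hcat, List.map_append, List.tail_cons, htail, hm1, List.take_append_drop]
end

section
/- For n ≥ 1, the maximal intervals of the poset MLT(n) of multilabeled trees on {1,…,n} are in bijection with labeled trees on {1,…,n}, and the maximal interval corresponding to a labeled tree t is isomorphic as a poset to the Boolean lattice of subsets of the edge set E(t) of t (which has n−1 elements). -/
/-- A multilabeled tree on `{1,…,n}`: a tree whose vertex set is a set partition of
`Fin n`, i.e. a partition `π` together with a tree structure on the set of blocks
`Quotient π`. -/
structure MLT (n : ℕ) where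
  π : Setoid (Fin n)
  G : SimpleGraph (Quotient π)
  tree : G.IsTree

/-- The order on multilabeled trees: `t ≤ t'` iff `t` is obtained from `t'` by
contracting edges and merging the corresponding blocks: `t'.π` refines `t.π`
(`t'.π ≤ t.π` as setoids), two blocks of `t` are adjacent iff they are distinct and
contain adjacent blocks of `t'`, and each block of `t` is connected in `t'` (any two of
its elements are joined by a walk of `t'.G` whose support stays inside the block). -/
def MLT.le {n : ℕ} (t t' : MLT n) : Prop :=
  t'.π ≤ t.π ∧
  (∀ x y : Fin n,
      t.G.Adj (Quotient.mk t.π x) (Quotient.mk t.π y) ↔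
        (¬ t.π.r x y ∧ ∃ a b : Fin n, t.π.r a x ∧ t.π.r b y ∧
          t'.G.Adj (Quotient.mk t'.π a) (Quotient.mk t'.π b))) ∧
  (∀ x y : Fin n, t.π.r x y →
      ∃ w : t'.G.Walk (Quotient.mk t'.π x) (Quotient.mk t'.π y),
        ∀ q ∈ w.support, t.π.r q.out x)

namespace Stmt19
open SimpleGraph

variable {n : ℕ}

/-- The canonical map to blocks. -/
abbrev Q (m : MLT n) (x : Fin n) : Quotient m.π := Quotient.mk m.π x

section Bot
variable {m : MLT n} (hm : m.π = ⊥)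
include hm

theorem rm_iff (a b : Fin n) : m.π.r a b ↔ a = b := by rw [hm]; exact Iff.rfl

theorem Q_inj : Function.Injective (Q m) := fun a b h =>
  (rm_iff hm a b).mp (Quotient.exact h)

theorem out_Q (x : Fin n) : (Q m x).out = x :=
  Q_inj hm (Quotient.out_eq _)

omit hm in
theorem Q_out (q : Quotient m.π) : Q m q.out = q := Quotient.out_eq q

end Bot

/-- The set of edges of `m` which are not contracted in `t`. -/
def fS (m t : MLT n) : Set m.G.edgeSet :=
  {e | ∃ x y, (e : Sym2 (Quotient m.π)) = s(Q m x, Q m y) ∧ ¬ t.π.r x y}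

/-- The graph of non-contracted... rather: the subgraph of `m` on `Fin n`
consisting of the edges NOT in `S`. -/
def HS (m : MLT n) (S : Set m.G.edgeSet) : SimpleGraph (Fin n) where
  Adj a b := m.G.Adj (Q m a) (Q m b) ∧ s(Q m a, Q m b) ∉ Subtype.val '' S
  symm := by
    constructor
    intro a b h
    refine ⟨h.1.symm, ?_⟩
    rw [Sym2.eq_swap]; exact h.2
  loopless := ⟨fun a h => m.G.loopless.irrefl _ h.1⟩

/-- Blocks: connected components of `HS`. -/
def σS (m : MLT n) (S : Set m.G.edgeSet) : Setoid (Fin n) := (HS m S).reachableSetoid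

theorem σS_r {m : MLT n} {S : Set m.G.edgeSet} {a b : Fin n} :
    (σS m S).r a b ↔ (HS m S).Reachable a b := Iff.rfl

/-- The contracted graph. -/
def GS (m : MLT n) (S : Set m.G.edgeSet) : SimpleGraph (Quotient (σS m S)) where
  Adj u v := u ≠ v ∧ ∃ a b : Fin n, Quotient.mk _ a = u ∧ Quotient.mk _ b = v ∧
    m.G.Adj (Q m a) (Q m b)
  symm := by
    constructor
    rintro u v ⟨huv, a, b, ha, hb, hab⟩
    exact ⟨huv.symm, b, a, hb, ha, hab.symm⟩
  loopless := ⟨fun u h => h.1 rfl⟩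

/-- The key property relating a graph on blocks to `m`. -/
def AdjIff (m : MLT n) (σ : Setoid (Fin n)) (B : SimpleGraph (Quotient σ)) : Prop :=
  ∀ x y : Fin n, B.Adj (Quotient.mk σ x) (Quotient.mk σ y) ↔
    (¬ σ.r x y ∧ ∃ a b : Fin n, σ.r a x ∧ σ.r b y ∧ m.G.Adj (Q m a) (Q m b))

theorem adjIff_GS (m : MLT n) (S : Set m.G.edgeSet) : AdjIff m (σS m S) (GS m S) := by
  intro x y
  constructor
  · rintro ⟨hne, a, b, ha, hb, hab⟩
    exact ⟨fun h => hne (Quotient.sound h), a, b, Quotient.exact ha, Quotient.exact hb, hab⟩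
  · rintro ⟨hne, a, b, ha, hb, hab⟩
    exact ⟨fun h => hne (Quotient.exact h), a, b, Quotient.sound ha, Quotient.sound hb, hab⟩

theorem adjIff_of_le {m t : MLT n} (h : MLT.le t m) : AdjIff m t.π t.G := h.2.1


/-- Projection of walks of `m` to walks of a contracted graph. -/
theorem proj_walk {m : MLT n} {σ : Setoid (Fin n)}
    {B : SimpleGraph (Quotient σ)} (hB : AdjIff m σ B) :
    ∀ (u v : Quotient m.π) (w : m.G.Walk u v),
      ∃ w' : B.Walk (Quotient.mk σ u.out) (Quotient.mk σ v.out),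
        ∀ q ∈ w'.support, ∃ e : Fin n, Q m e ∈ w.support ∧ σ.r q.out e := by
  intro u v w
  induction w with
  | @nil u =>
    refine ⟨SimpleGraph.Walk.nil, ?_⟩
    intro q hq
    rw [SimpleGraph.Walk.support_nil, List.mem_singleton] at hq
    subst hq
    exact ⟨u.out, by rw [Q_out]; exact List.mem_singleton.mpr rfl,
      Quotient.exact (Quotient.out_eq _)⟩
  | @cons u v' v h p ih =>
    obtain ⟨w', hw'⟩ := ih
    by_cases hcd : σ.r u.out v'.out
    · refine ⟨w'.copy (Quotient.sound hcd).symm rfl, ?_⟩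
      intro q hq
      rw [SimpleGraph.Walk.support_copy] at hq
      obtain ⟨e, he1, he2⟩ := hw' q hq
      exact ⟨e, by rw [SimpleGraph.Walk.support_cons]; exact List.mem_cons_of_mem _ he1, he2⟩
    · have hadj : B.Adj (Quotient.mk σ u.out) (Quotient.mk σ v'.out) := by
        rw [hB]
        refine ⟨hcd, u.out, v'.out, σ.refl _, σ.refl _, ?_⟩
        rw [Q_out, Q_out]
        exact h
      refine ⟨SimpleGraph.Walk.cons hadj w', ?_⟩
      intro q hq
      rw [SimpleGraph.Walk.support_cons, List.mem_cons] at hq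
      rcases hq with rfl | hq
      · exact ⟨u.out, by rw [Q_out]; exact List.mem_cons_self,
          Quotient.exact (Quotient.out_eq _)⟩
      · obtain ⟨e, he1, he2⟩ := hw' q hq
        exact ⟨e, by rw [SimpleGraph.Walk.support_cons]; exact List.mem_cons_of_mem _ he1, he2⟩

/-- Elements of the same block are reachable in `m` minus a deleted `S`-edge. -/
theorem block_reach_del {m : MLT n} {S : Set m.G.edgeSet} {Δ : Sym2 (Quotient m.π)}
    (hΔ : Δ ∈ Subtype.val '' S) {p q : Fin n} (hr : (σS m S).r p q) :
    (m.G \ SimpleGraph.fromEdgeSet {Δ}).Reachable (Q m p) (Q m q) := by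
  refine SimpleGraph.Reachable.map (⟨Q m, ?_⟩ : HS m S →g _) (σS_r.mp hr)
  intro a b hab
  rw [SimpleGraph.sdiff_adj]
  refine ⟨hab.1, ?_⟩
  rw [SimpleGraph.fromEdgeSet_adj]
  rintro ⟨he, -⟩
  rw [Set.mem_singleton_iff] at he
  exact hab.2 (he ▸ hΔ)

theorem block_reach {m : MLT n} {S : Set m.G.edgeSet} {p q : Fin n}
    (hr : (σS m S).r p q) : m.G.Reachable (Q m p) (Q m q) :=
  SimpleGraph.Reachable.map (⟨Q m, fun hab => hab.1⟩ : HS m S →g m.G) (σS_r.mp hr)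

/-- Every edge of the contracted graph comes from an edge of `m` belonging to `S`. -/
theorem GS_adj_edge {m : MLT n} {S : Set m.G.edgeSet} {u v : Quotient (σS m S)}
    (h : (GS m S).Adj u v) :
    ∃ a b : Fin n, Quotient.mk (σS m S) a = u ∧ Quotient.mk (σS m S) b = v ∧
      m.G.Adj (Q m a) (Q m b) ∧ s(Q m a, Q m b) ∈ Subtype.val '' S := by
  obtain ⟨hne, a, b, ha, hb, hab⟩ := h
  refine ⟨a, b, ha, hb, hab, ?_⟩
  by_contra hnot
  exact hne (ha ▸ hb ▸ Quotient.sound (σS_r.mpr (SimpleGraph.Adj.reachable ⟨hab, hnot⟩)))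


/-- Lifting walks of the contracted graph (with a removed edge) back to `m`. -/
theorem lift_reach_del {m : MLT n} (hm : m.π = ⊥) {S : Set m.G.edgeSet} {a0 b0 : Fin n}
    (hin : s(Q m a0, Q m b0) ∈ Subtype.val '' S) :
    ∀ (u v : Quotient (σS m S))
      (w : ((GS m S) \ SimpleGraph.fromEdgeSet
          {s(Quotient.mk (σS m S) a0, Quotient.mk (σS m S) b0)}).Walk u v),
      (m.G \ SimpleGraph.fromEdgeSet {s(Q m a0, Q m b0)}).Reachable
        (Q m u.out) (Q m v.out) := by
  intro u v w
  induction w with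
  | nil => exact SimpleGraph.Reachable.refl _
  | @cons u v₁ v h p ih =>
    rw [SimpleGraph.sdiff_adj] at h
    obtain ⟨hGS, hdel⟩ := h
    obtain ⟨c, d, hc, hd, hcd, hcdS⟩ := GS_adj_edge hGS
    have r1 : (σS m S).r u.out c :=
      Quotient.exact ((Quotient.out_eq u).trans hc.symm)
    have r2 : (σS m S).r d v₁.out :=
      Quotient.exact (hd.trans (Quotient.out_eq v₁).symm)
    have hstep : (m.G \ SimpleGraph.fromEdgeSet {s(Q m a0, Q m b0)}).Adj (Q m c) (Q m d) := by
      rw [SimpleGraph.sdiff_adj]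
      refine ⟨hcd, ?_⟩
      rw [SimpleGraph.fromEdgeSet_adj]
      rintro ⟨he, -⟩
      rw [Set.mem_singleton_iff, Sym2.eq_iff] at he
      apply hdel
      rw [SimpleGraph.fromEdgeSet_adj]
      refine ⟨?_, hGS.ne⟩
      rw [Set.mem_singleton_iff, ← hc, ← hd, Sym2.eq_iff]
      rcases he with ⟨h1, h2⟩ | ⟨h1, h2⟩
      · exact Or.inl ⟨by rw [Q_inj hm h1], by rw [Q_inj hm h2]⟩
      · exact Or.inr ⟨by rw [Q_inj hm h1], by rw [Q_inj hm h2]⟩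
    exact ((block_reach_del hin r1).trans
      (hstep.reachable.trans (block_reach_del hin r2))).trans ih

/-- The contracted graph is a tree. -/
theorem GS_isTree {m : MLT n} (hm : m.π = ⊥) (hn : 1 ≤ n) (S : Set m.G.edgeSet) :
    (GS m S).IsTree := by
  constructor
  · rw [SimpleGraph.connected_iff]
    constructor
    · intro u v
      obtain ⟨w⟩ := m.tree.isConnected.preconnected (Q m u.out) (Q m v.out)
      obtain ⟨w', -⟩ := proj_walk (adjIff_GS m S) _ _ w
      rw [out_Q hm, out_Q hm] at w'
      have := w'.reachable
      rwa [Quotient.out_eq, Quotient.out_eq] at this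
    · have : Nonempty (Fin n) := ⟨⟨0, hn⟩⟩
      exact Nonempty.map (Quotient.mk _) this
  · rw [SimpleGraph.isAcyclic_iff_forall_adj_isBridge]
    intro u v hadj
    obtain ⟨c, d, hc, hd, hcd, hcdS⟩ := GS_adj_edge hadj
    subst hc; subst hd
    rw [SimpleGraph.isBridge_iff]
    rintro ⟨w⟩
    have hlift := lift_reach_del hm hcdS _ _ w
    have rc : (σS m S).r c (Quotient.mk (σS m S) c).out :=
      Quotient.exact (Quotient.out_eq _).symm
    have rd : (σS m S).r (Quotient.mk (σS m S) d).out d :=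
      Quotient.exact (Quotient.out_eq _)
    have hreach : (m.G \ SimpleGraph.fromEdgeSet {s(Q m c, Q m d)}).Reachable
        (Q m c) (Q m d) :=
      (block_reach_del hcdS rc).trans (hlift.trans (block_reach_del hcdS rd))
    exact (SimpleGraph.isBridge_iff.mp
      (SimpleGraph.isAcyclic_iff_forall_adj_isBridge.mp m.tree.IsAcyclic hcd)) hreach

/-- The MLT given by contracting the edges of `m` outside `S`. -/
def tS {m : MLT n} (hm : m.π = ⊥) (hn : 1 ≤ n) (S : Set m.G.edgeSet) : MLT n :=
  ⟨σS m S, GS m S, GS_isTree hm hn S⟩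

theorem le_tS {m : MLT n} (hm : m.π = ⊥) (hn : 1 ≤ n) (S : Set m.G.edgeSet) :
    MLT.le (tS hm hn S) m := by
  refine ⟨?_, adjIff_GS m S, ?_⟩
  · intro a b hab
    rw [rm_iff hm] at hab
    exact hab ▸ (σS m S).refl a
  · intro x y hxy
    obtain ⟨hw⟩ := σS_r.mp hxy
    refine ⟨hw.map (⟨Q m, fun hab => hab.1⟩ : HS m S →g m.G), ?_⟩
    intro q hq
    rw [SimpleGraph.Walk.support_map, List.mem_map] at hq
    obtain ⟨a, ha, rfl⟩ := hq
    have : (σS m S).r a x := ((hw.takeUntil a ha).reachable).symm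
    rwa [show ((⟨Q m, fun hab => hab.1⟩ : HS m S →g m.G) a).out = a from out_Q hm a]


theorem edge_rep {m : MLT n} (e : m.G.edgeSet) :
    ∃ x y : Fin n, (e : Sym2 (Quotient m.π)) = s(Q m x, Q m y) ∧ m.G.Adj (Q m x) (Q m y) := by
  obtain ⟨val, he⟩ := e
  induction val using Sym2.ind with
  | _ u v =>
    refine ⟨u.out, v.out, ?_, ?_⟩
    · simp [Q_out]
    · rw [Q_out, Q_out]
      exact he

theorem mem_fS_iff {m t : MLT n} (hm : m.π = ⊥) (e : m.G.edgeSet) {x y : Fin n}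
    (hrep : (e : Sym2 (Quotient m.π)) = s(Q m x, Q m y)) :
    e ∈ fS m t ↔ ¬ t.π.r x y := by
  constructor
  · rintro ⟨x', y', hrep', hn⟩
    rw [hrep, Sym2.eq_iff] at hrep'
    intro hr
    rcases hrep' with ⟨h1, h2⟩ | ⟨h1, h2⟩
    · exact hn ((Q_inj hm h1) ▸ (Q_inj hm h2) ▸ hr)
    · exact hn ((Q_inj hm h1) ▸ (Q_inj hm h2) ▸ t.π.symm hr)
  · intro hn
    exact ⟨x, y, hrep, hn⟩

theorem HS_fS_adj {m t : MLT n} (hm : m.π = ⊥) (a b : Fin n) :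
    (HS m (fS m t)).Adj a b ↔ m.G.Adj (Q m a) (Q m b) ∧ t.π.r a b := by
  constructor
  · rintro ⟨hadj, hnot⟩
    refine ⟨hadj, ?_⟩
    by_contra hr
    exact hnot ⟨⟨s(Q m a, Q m b), hadj⟩, (mem_fS_iff hm _ rfl).mpr hr, rfl⟩
  · rintro ⟨hadj, hr⟩
    refine ⟨hadj, ?_⟩
    rintro ⟨e', he', heq⟩
    rw [mem_fS_iff hm e' heq] at he'
    exact he' hr

theorem r_iff_σS {m t : MLT n} (hm : m.π = ⊥) (ht : MLT.le t m) (x y : Fin n) :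
    t.π.r x y ↔ (σS m (fS m t)).r x y := by
  constructor
  · intro hr
    obtain ⟨w, hw⟩ := ht.2.2 x y hr
    have aux : ∀ (u v : Quotient m.π) (w : m.G.Walk u v),
        (∀ q ∈ w.support, t.π.r q.out x) → (σS m (fS m t)).r u.out v.out := by
      intro u v w
      induction w with
      | nil => exact fun _ => (σS m (fS m t)).refl _
      | @cons u v₁ v h p ih =>
        intro hsupp
        have h1 : t.π.r u.out x := hsupp u (by simp [SimpleGraph.Walk.support_cons])
        have h2 : t.π.r v₁.out x := hsupp v₁ (by
          rw [SimpleGraph.Walk.support_cons]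
          exact List.mem_cons_of_mem _ p.start_mem_support)
        have hstep : (HS m (fS m t)).Adj u.out v₁.out := by
          rw [HS_fS_adj hm, Q_out, Q_out]
          exact ⟨h, t.π.trans h1 (t.π.symm h2)⟩
        refine (σS m (fS m t)).trans (σS_r.mpr hstep.reachable) (ih ?_)
        intro q hq
        exact hsupp q (by rw [SimpleGraph.Walk.support_cons]; exact List.mem_cons_of_mem _ hq)
    have := aux _ _ w (by intro q hq; exact hw q hq)
    rwa [out_Q hm, out_Q hm] at this
  · intro hr
    obtain ⟨w⟩ := σS_r.mp hr
    clear hr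
    induction w with
    | nil => exact t.π.refl _
    | @cons a b c h p ih =>
      have := ((HS_fS_adj hm a b).mp h).2
      exact t.π.trans this ih

theorem fS_tS {m : MLT n} (hm : m.π = ⊥) (hn : 1 ≤ n) (S : Set m.G.edgeSet) :
    fS m (tS hm hn S) = S := by
  ext e
  obtain ⟨x, y, hrep, hadj⟩ := edge_rep e
  rw [mem_fS_iff hm e hrep]
  show ¬ (σS m S).r x y ↔ e ∈ S
  constructor
  · intro hnr
    by_contra heS
    refine hnr (σS_r.mpr (SimpleGraph.Adj.reachable ⟨hadj, ?_⟩))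
    rintro ⟨e', he'S, heq⟩
    have he : e' = e := Subtype.ext (heq.trans hrep.symm)
    exact heS (he ▸ he'S)
  · intro heS hr
    have hΔ : (s(Q m x, Q m y) : Sym2 (Quotient m.π)) ∈ Subtype.val '' S :=
      ⟨e, heS, hrep⟩
    have := block_reach_del hΔ hr
    exact (SimpleGraph.isBridge_iff.mp
      (SimpleGraph.isAcyclic_iff_forall_adj_isBridge.mp m.tree.IsAcyclic hadj)) this


theorem MLT.ext' {t1 t2 : MLT n} (hπ : t1.π = t2.π)
    (hG : ∀ x y : Fin n,
      t1.G.Adj (Quotient.mk t1.π x) (Quotient.mk t1.π y) ↔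
      t2.G.Adj (Quotient.mk t2.π x) (Quotient.mk t2.π y)) : t1 = t2 := by
  obtain ⟨π1, G1, tr1⟩ := t1
  obtain ⟨π2, G2, tr2⟩ := t2
  dsimp at hπ
  subst hπ
  dsimp at hG
  have : G1 = G2 := by
    ext u v
    induction u using Quotient.ind
    induction v using Quotient.ind
    exact hG _ _
  subst this
  rfl

theorem fS_inj {m t1 t2 : MLT n} (hm : m.π = ⊥) (h1 : MLT.le t1 m) (h2 : MLT.le t2 m)
    (h : fS m t1 = fS m t2) : t1 = t2 := by
  have hπ : t1.π = t2.π := by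
    apply Setoid.ext
    intro a b
    rw [r_iff_σS hm h1, r_iff_σS hm h2, h]
  refine MLT.ext' hπ ?_
  intro x y
  rw [h1.2.1 x y, h2.2.1 x y, hπ]

theorem le_iff_subset {m a b : MLT n} (hm : m.π = ⊥) (ha : MLT.le a m) (hb : MLT.le b m) :
    MLT.le a b ↔ fS m a ⊆ fS m b := by
  constructor
  · rintro hab e ⟨x, y, hrep, hn⟩
    exact ⟨x, y, hrep, fun h => hn (hab.1 h)⟩
  · intro hsub
    -- (i) b-blocks are contained in a-blocks
    have hba : ∀ x y : Fin n, b.π.r x y → a.π.r x y := by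
      intro x y hr
      obtain ⟨w, hw⟩ := hb.2.2 x y hr
      have aux : ∀ (u v : Quotient m.π) (w : m.G.Walk u v),
          (∀ q ∈ w.support, b.π.r q.out x) → a.π.r u.out v.out := by
        intro u v w
        induction w with
        | nil => exact fun _ => a.π.refl _
        | @cons u v₁ v hadj p ih =>
          intro hsupp
          have hb1 : b.π.r u.out x := hsupp u (by simp [SimpleGraph.Walk.support_cons])
          have hb2 : b.π.r v₁.out x := hsupp v₁ (by
            rw [SimpleGraph.Walk.support_cons]
            exact List.mem_cons_of_mem _ p.start_mem_support)
          have hbr : b.π.r u.out v₁.out := b.π.trans hb1 (b.π.symm hb2)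
          have hadj' : m.G.Adj (Q m u.out) (Q m v₁.out) := by rw [Q_out, Q_out]; exact hadj
          have hnb : (⟨s(Q m u.out, Q m v₁.out), hadj'⟩ : m.G.edgeSet) ∉ fS m b := by
            rw [mem_fS_iff hm _ rfl]
            exact not_not.mpr hbr
          have hna : (⟨s(Q m u.out, Q m v₁.out), hadj'⟩ : m.G.edgeSet) ∉ fS m a :=
            fun hmem => hnb (hsub hmem)
          have har : a.π.r u.out v₁.out := by
            by_contra hcon
            exact hna ((mem_fS_iff hm _ rfl).mpr hcon)
          refine a.π.trans har (ih ?_)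
          intro q hq
          exact hsupp q (by rw [SimpleGraph.Walk.support_cons]; exact List.mem_cons_of_mem _ hq)
      have := aux _ _ w hw
      rwa [out_Q hm, out_Q hm] at this
    refine ⟨hba, ?_, ?_⟩
    · -- (ii) adjacency
      intro x y
      constructor
      · intro hadj
        obtain ⟨hnr, c, d, hcx, hdy, hcd⟩ := (ha.2.1 x y).mp hadj
        have hnbcd : ¬ b.π.r c d := by
          intro hbr
          exact hnr (a.π.trans (a.π.symm hcx) (a.π.trans (hba _ _ hbr) hdy))
        refine ⟨hnr, c, d, hcx, hdy, ?_⟩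
        exact (hb.2.1 c d).mpr ⟨hnbcd, c, d, b.π.refl _, b.π.refl _, hcd⟩
      · rintro ⟨hnr, c, d, hcx, hdy, hbcd⟩
        obtain ⟨hnbcd, p, q, hpc, hqd, hpq⟩ := (hb.2.1 c d).mp hbcd
        refine (ha.2.1 x y).mpr ⟨hnr, p, q, ?_, ?_, hpq⟩
        · exact a.π.trans (hba _ _ hpc) hcx
        · exact a.π.trans (hba _ _ hqd) hdy
    · -- (iii) walks
      intro x y hxy
      obtain ⟨w, hw⟩ := ha.2.2 x y hxy
      obtain ⟨w', hw'⟩ := proj_walk hb.2.1 _ _ w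
      refine ⟨w'.copy (by rw [out_Q hm]) (by rw [out_Q hm]), ?_⟩
      intro q hq
      rw [SimpleGraph.Walk.support_copy] at hq
      obtain ⟨e, hes, hbe⟩ := hw' q hq
      have h1 : a.π.r q.out e := hba _ _ hbe
      have h2 : a.π.r e x := by
        have := hw (Q m e) hes
        rwa [out_Q hm] at this
      exact a.π.trans h1 h2


theorem Q_surj {m : MLT n} : Function.Surjective (Q m) := fun q => ⟨q.out, Q_out q⟩

theorem card_edges {m : MLT n} (hm : m.π = ⊥) : Nat.card m.G.edgeSet = n - 1 := by
  haveI : Fintype (Quotient m.π) := Fintype.ofFinite _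
  haveI : Fintype m.G.edgeSet := Fintype.ofFinite _
  have h1 := m.tree.card_edgeFinset
  have h2 : Fintype.card (Quotient m.π) = n := by
    have h3 := Fintype.card_congr (Equiv.ofBijective (Q m) ⟨Q_inj hm, Q_surj⟩)
    rw [Fintype.card_fin] at h3
    exact h3.symm
  rw [SimpleGraph.edgeFinset_card] at h1
  rw [Nat.card_eq_fintype_card]
  omega

theorem max_of_bot {m : MLT n} (hm : m.π = ⊥) (t : MLT n) (hmt : MLT.le m t) :
    MLT.le t m := by
  have ht : t.π = ⊥ := by
    apply Setoid.ext
    intro a b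
    constructor
    · intro h
      exact (rm_iff hm a b).mp (hmt.1 h)
    · intro h
      exact h ▸ t.π.refl a
  have hGadj : ∀ x y : Fin n,
      m.G.Adj (Quotient.mk m.π x) (Quotient.mk m.π y) ↔
      t.G.Adj (Quotient.mk t.π x) (Quotient.mk t.π y) := by
    intro x y
    constructor
    · intro h
      obtain ⟨hnr, a, b, hax, hby, htab⟩ := (hmt.2.1 x y).mp h
      rw [rm_iff hm] at hax hby
      exact hax ▸ hby ▸ htab
    · intro h
      refine (hmt.2.1 x y).mpr ⟨?_, x, y, m.π.refl _, m.π.refl _, h⟩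
      intro hr
      rw [rm_iff hm] at hr
      subst hr
      exact t.G.loopless.irrefl _ h
  refine ⟨le_of_eq hm |>.trans bot_le, ?_, ?_⟩
  · intro x y
    constructor
    · intro h
      refine ⟨?_, x, y, t.π.refl _, t.π.refl _, (hGadj x y).mpr h⟩
      intro hr
      rw [rm_iff ht] at hr
      subst hr
      exact t.G.loopless.irrefl _ h
    · rintro ⟨hnr, a, b, hax, hby, hmab⟩
      rw [rm_iff ht] at hax hby
      subst hax; subst hby
      exact (hGadj a b).mp hmab
  · intro x y hr
    rw [rm_iff ht] at hr
    subst hr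
    refine ⟨SimpleGraph.Walk.nil, ?_⟩
    intro q hq
    rw [SimpleGraph.Walk.support_nil, List.mem_singleton] at hq
    subst hq
    rw [out_Q hm]


section Pendant

variable (m : MLT n) (x y : Fin n)

/-- Split `x` off from its block. -/
def πP : Setoid (Fin n) :=
  ⟨fun a b => m.π.r a b ∧ (a = x ↔ b = x),
   ⟨fun a => ⟨m.π.refl a, Iff.rfl⟩,
    fun h => ⟨m.π.symm h.1, h.2.symm⟩,
    fun h1 h2 => ⟨m.π.trans h1.1 h2.1, h1.2.trans h2.2⟩⟩⟩

theorem mkP_eq_x {m : MLT n} {x a : Fin n} :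
    Quotient.mk (πP m x) a = Quotient.mk (πP m x) x ↔ a = x := by
  constructor
  · intro h
    exact (Quotient.exact h).2.mpr rfl
  · rintro rfl; rfl

def pP : Quotient (πP m x) → Quotient m.π :=
  Quotient.lift (fun a => Quotient.mk m.π a) (fun a b h => Quotient.sound h.1)

variable (hxy : m.π.r x y) (hne : x ≠ y)

def qP : Quotient m.π → Quotient (πP m x) :=
  Quotient.lift (fun a => if a = x then Quotient.mk (πP m x) y else Quotient.mk (πP m x) a)
    (by
      intro a b h
      show (if a = x then _ else _) = (if b = x then _ else _)
      by_cases ha : a = x <;> by_cases hb : b = x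
      · simp [ha, hb]
      · rw [if_pos ha, if_neg hb]
        exact Quotient.sound ⟨m.π.trans (m.π.symm hxy) (ha ▸ h), by simp [hb, hne.symm]⟩
      · rw [if_neg ha, if_pos hb]
        exact Quotient.sound ⟨m.π.trans (hb ▸ h) hxy, by simp [ha, hne.symm]⟩
      · rw [if_neg ha, if_neg hb]
        exact Quotient.sound ⟨h, by simp [ha, hb]⟩)

theorem qP_mk_x : qP m x y hxy hne (Quotient.mk m.π x) = Quotient.mk (πP m x) y := if_pos rfl

theorem qP_mk_ne {a : Fin n} (ha : a ≠ x) :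
    qP m x y hxy hne (Quotient.mk m.π a) = Quotient.mk (πP m x) a := if_neg ha

theorem pP_qP : ∀ u, pP m x (qP m x y hxy hne u) = u := by
  intro u
  induction u using Quotient.ind with
  | _ a =>
    by_cases ha : a = x
    · subst ha
      rw [qP_mk_x]
      exact Quotient.sound (m.π.symm hxy)
    · rw [qP_mk_ne m x y hxy hne ha]
      rfl

theorem qP_ne_x : ∀ u, qP m x y hxy hne u ≠ Quotient.mk (πP m x) x := by
  intro u
  induction u using Quotient.ind with
  | _ a =>
    by_cases ha : a = x
    · subst ha
      rw [qP_mk_x, Ne, mkP_eq_x]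
      exact hne.symm
    · rw [qP_mk_ne m x y hxy hne ha, Ne, mkP_eq_x]
      exact ha

theorem qP_pP : ∀ u, u ≠ Quotient.mk (πP m x) x → qP m x y hxy hne (pP m x u) = u := by
  intro u
  induction u using Quotient.ind with
  | _ a =>
    intro hu
    have ha : a ≠ x := fun h => hu (mkP_eq_x.mpr h)
    exact qP_mk_ne m x y hxy hne ha

/-- Add the pendant vertex `{x}` to (the rest of) `m`. -/
def GP : SimpleGraph (Quotient (πP m x)) where
  Adj u v :=
    (u ≠ Quotient.mk (πP m x) x ∧ v ≠ Quotient.mk (πP m x) x ∧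
      m.G.Adj (pP m x u) (pP m x v)) ∨
    (u = Quotient.mk (πP m x) x ∧ v = Quotient.mk (πP m x) y) ∨
    (u = Quotient.mk (πP m x) y ∧ v = Quotient.mk (πP m x) x)
  symm := by
    constructor
    rintro u v (⟨h1, h2, h3⟩ | ⟨h1, h2⟩ | ⟨h1, h2⟩)
    · exact Or.inl ⟨h2, h1, h3.symm⟩
    · exact Or.inr (Or.inr ⟨h2, h1⟩)
    · exact Or.inr (Or.inl ⟨h2, h1⟩)
  loopless := by
    constructor
    rintro u (⟨h1, h2, h3⟩ | ⟨h1, h2⟩ | ⟨h1, h2⟩)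
    · exact m.G.loopless.irrefl _ h3
    · exact hne ((mkP_eq_x.mp (h2.symm.trans h1)).symm)
    · exact hne ((mkP_eq_x.mp (h1.symm.trans h2)).symm)

theorem homP_adj {u v : Quotient m.π} (h : m.G.Adj u v) :
    (GP m x y hne).Adj (qP m x y hxy hne u) (qP m x y hxy hne v) :=
  Or.inl ⟨qP_ne_x m x y hxy hne _, qP_ne_x m x y hxy hne _, by
    rw [pP_qP m x y hxy hne, pP_qP m x y hxy hne]; exact h⟩

theorem no_pendant_reach :
    ¬ ((GP m x y hne) \ SimpleGraph.fromEdgeSet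
        {s(Quotient.mk (πP m x) x, Quotient.mk (πP m x) y)}).Reachable
      (Quotient.mk (πP m x) x) (Quotient.mk (πP m x) y) := by
  rintro ⟨w⟩
  have aux : ∀ (u v : Quotient (πP m x))
      (_ : ((GP m x y hne) \ SimpleGraph.fromEdgeSet
        {s(Quotient.mk (πP m x) x, Quotient.mk (πP m x) y)}).Walk u v),
      u = Quotient.mk (πP m x) x → v = Quotient.mk (πP m x) x := by
    intro u v w
    induction w with
    | nil => exact id
    | @cons u v₁ v h p ih =>
      intro hu
      subst hu
      rw [SimpleGraph.sdiff_adj] at h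
      obtain ⟨hGP, hdel⟩ := h
      exfalso
      rcases hGP with ⟨h1, -, -⟩ | ⟨-, h2⟩ | ⟨h1, -⟩
      · exact h1 rfl
      · subst h2
        apply hdel
        rw [SimpleGraph.fromEdgeSet_adj]
        refine ⟨rfl, ?_⟩
        rw [Ne, eq_comm, mkP_eq_x]
        exact hne.symm
      · exact hne (mkP_eq_x.mp h1.symm).symm
  exact hne ((mkP_eq_x.mp (aux _ _ w rfl)).symm)

include hxy in
theorem collapseP {u0 v0 : Quotient (πP m x)} (hu0 : u0 ≠ Quotient.mk (πP m x) x)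
    (hv0 : v0 ≠ Quotient.mk (πP m x) x) :
    ∀ (a b : Quotient (πP m x))
      (w : ((GP m x y hne) \ SimpleGraph.fromEdgeSet {s(u0, v0)}).Walk a b),
      (m.G \ SimpleGraph.fromEdgeSet {s(pP m x u0, pP m x v0)}).Reachable
        (pP m x a) (pP m x b) := by
  intro a b w
  induction w with
  | nil => exact SimpleGraph.Reachable.refl _
  | @cons a v₁ b h p ih =>
    rw [SimpleGraph.sdiff_adj] at h
    obtain ⟨hGP, hdel⟩ := h
    rcases hGP with ⟨h1, h2, h3⟩ | ⟨ha, hv⟩ | ⟨ha, hv⟩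
    · refine (SimpleGraph.Adj.reachable ?_).trans ih
      rw [SimpleGraph.sdiff_adj]
      refine ⟨h3, ?_⟩
      rw [SimpleGraph.fromEdgeSet_adj]
      rintro ⟨hmem, -⟩
      rw [Set.mem_singleton_iff, Sym2.eq_iff] at hmem
      apply hdel
      rw [SimpleGraph.fromEdgeSet_adj]
      refine ⟨?_, (show (GP m x y hne).Adj a v₁ from Or.inl ⟨h1, h2, h3⟩).ne⟩
      rw [Set.mem_singleton_iff, Sym2.eq_iff]
      have inj : ∀ (c d : Quotient (πP m x)), c ≠ Quotient.mk (πP m x) x →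
          d ≠ Quotient.mk (πP m x) x → pP m x c = pP m x d → c = d := by
        intro c d hc hd hcd
        rw [← qP_pP m x y hxy hne c hc, ← qP_pP m x y hxy hne d hd, hcd]
      rcases hmem with ⟨e1, e2⟩ | ⟨e1, e2⟩
      · exact Or.inl ⟨inj _ _ h1 hu0 e1, inj _ _ h2 hv0 e2⟩
      · exact Or.inr ⟨inj _ _ h1 hv0 e1, inj _ _ h2 hu0 e2⟩
    · have hpp : pP m x a = pP m x v₁ := by
        rw [ha, hv]
        exact Quotient.sound hxy
      exact hpp ▸ ih
    · have hpp : pP m x a = pP m x v₁ := by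
        rw [ha, hv]
        exact Quotient.sound (m.π.symm hxy)
      exact hpp ▸ ih

include hxy in
theorem treeP : (GP m x y hne).IsTree := by
  constructor
  · rw [SimpleGraph.connected_iff]
    constructor
    · have key : ∀ u, (GP m x y hne).Reachable u (qP m x y hxy hne (pP m x u)) := by
        intro u
        by_cases hu : u = Quotient.mk (πP m x) x
        · subst hu
          have : pP m x (Quotient.mk (πP m x) x) = Quotient.mk m.π x := rfl
          rw [this, qP_mk_x]
          exact (SimpleGraph.Adj.reachable (Or.inr (Or.inl ⟨rfl, rfl⟩)))
        · rw [qP_pP m x y hxy hne u hu]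
      intro u v
      have r2 : (GP m x y hne).Reachable (qP m x y hxy hne (pP m x u)) (qP m x y hxy hne (pP m x v)) := by
        obtain ⟨w⟩ := m.tree.isConnected.preconnected (pP m x u) (pP m x v)
        exact SimpleGraph.Reachable.map
          (⟨qP m x y hxy hne, fun h => homP_adj m x y hxy hne h⟩ : m.G →g GP m x y hne) ⟨w⟩
      exact ((key u).trans r2).trans (key v).symm
    · exact ⟨Quotient.mk (πP m x) x⟩
  · rw [SimpleGraph.isAcyclic_iff_forall_adj_isBridge]
    intro u v hadj
    rw [SimpleGraph.isBridge_iff]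
    rcases hadj with ⟨h1, h2, h3⟩ | ⟨hu, hv⟩ | ⟨hu, hv⟩
    · intro hr
      obtain ⟨w⟩ := hr
      have := collapseP m x y hxy hne h1 h2 _ _ w
      exact (SimpleGraph.isBridge_iff.mp
        (SimpleGraph.isAcyclic_iff_forall_adj_isBridge.mp m.tree.IsAcyclic h3)) this
    · subst hu; subst hv
      exact no_pendant_reach m x y hne
    · subst hu; subst hv
      intro hr
      rw [Sym2.eq_swap] at hr
      exact no_pendant_reach m x y hne hr.symm

def tP : MLT n := ⟨πP m x, GP m x y hne, treeP m x y hxy hne⟩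

theorem le_pendant : MLT.le m (tP m x y hxy hne) := by
  refine ⟨?_, ?_, ?_⟩
  · intro a b h
    exact h.1
  · intro x0 y0
    constructor
    · intro hadj
      have hnr : ¬ m.π.r x0 y0 := by
        intro hr
        exact m.G.loopless.irrefl _ ((Quotient.sound hr : Quotient.mk m.π x0 = _) ▸ hadj)
      refine ⟨hnr, if x0 = x then y else x0, if y0 = x then y else y0, ?_, ?_, ?_⟩
      · split
        · next h => exact h ▸ m.π.symm hxy
        · exact m.π.refl _
      · split
        · next h => exact h ▸ m.π.symm hxy
        · exact m.π.refl _
      · have hamk : Quotient.mk (πP m x) (if x0 = x then y else x0) =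
            qP m x y hxy hne (Quotient.mk m.π x0) := by
          split
          · next h => rw [h, qP_mk_x]
          · next h => rw [qP_mk_ne m x y hxy hne h]
        have hbmk : Quotient.mk (πP m x) (if y0 = x then y else y0) =
            qP m x y hxy hne (Quotient.mk m.π y0) := by
          split
          · next h => rw [h, qP_mk_x]
          · next h => rw [qP_mk_ne m x y hxy hne h]
        show (GP m x y hne).Adj (Quotient.mk (πP m x) (if x0 = x then y else x0))
          (Quotient.mk (πP m x) (if y0 = x then y else y0))
        rw [hamk, hbmk]
        exact homP_adj m x y hxy hne hadj
    · rintro ⟨hnr, a, b, har, hbr, hadj⟩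
      rcases hadj with ⟨-, -, h3⟩ | ⟨ha, hb⟩ | ⟨ha, hb⟩
      · have e1 : pP m x (Quotient.mk (πP m x) a) = Quotient.mk m.π x0 := Quotient.sound har
        have e2 : pP m x (Quotient.mk (πP m x) b) = Quotient.mk m.π y0 := Quotient.sound hbr
        exact e1 ▸ e2 ▸ h3
      · have h1 : m.π.r a x := ((Quotient.exact ha) : (πP m x).r a x).1
        have h2 : m.π.r b y := by
          have := ((Quotient.exact hb) : (πP m x).r b y).1
          exact this
        exact absurd (m.π.trans (m.π.symm har) (m.π.trans h1 (m.π.trans hxy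
          (m.π.trans (m.π.symm h2) hbr)))) hnr
      · have h1 : m.π.r a y := ((Quotient.exact ha) : (πP m x).r a y).1
        have h2 : m.π.r b x := ((Quotient.exact hb) : (πP m x).r b x).1
        exact absurd (m.π.trans (m.π.symm har) (m.π.trans h1 (m.π.trans (m.π.symm hxy)
          (m.π.trans (m.π.symm h2) hbr)))) hnr
  · intro x0 y0 hr
    by_cases hP : (πP m x).r x0 y0
    · refine ⟨SimpleGraph.Walk.nil.copy rfl (Quotient.sound hP), ?_⟩
      intro q hq
      rw [SimpleGraph.Walk.support_copy, SimpleGraph.Walk.support_nil,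
        List.mem_singleton] at hq
      subst hq
      exact ((Quotient.exact (Quotient.out_eq _)) : (πP m x).r _ x0).1
    · by_cases hx0 : x0 = x
      · have hy0 : y0 ≠ x := by
          intro h
          exact hP ⟨hr, by simp [hx0, h]⟩
        have hyy0 : (πP m x).r y y0 :=
          ⟨m.π.trans (m.π.symm hxy) (hx0 ▸ hr), by simp [hy0, hne.symm]⟩
        refine ⟨(SimpleGraph.Walk.cons (Or.inr (Or.inl ⟨rfl, rfl⟩)) SimpleGraph.Walk.nil).copy
          (congrArg (Quotient.mk (πP m x)) hx0).symm (Quotient.sound hyy0), ?_⟩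
        intro q hq
        erw [SimpleGraph.Walk.support_copy, SimpleGraph.Walk.support_cons,
          SimpleGraph.Walk.support_nil] at hq
        rcases List.mem_cons.mp hq with rfl | hq'
        · have h1 : (πP m x).r (Quotient.mk (πP m x) x).out x :=
            Quotient.exact (Quotient.out_eq _)
          rw [hx0]
          exact h1.1
        · rw [List.mem_singleton] at hq'
          subst hq'
          have h1 : (πP m x).r (Quotient.mk (πP m x) y).out y :=
            Quotient.exact (Quotient.out_eq _)
          rw [hx0]
          exact m.π.trans h1.1 (m.π.symm hxy)
      · have hy0 : y0 = x := by
          by_contra h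
          exact hP ⟨hr, by simp [hx0, h]⟩
        have hrx : m.π.r x0 x := hy0 ▸ hr
        have hx0y : (πP m x).r x0 y :=
          ⟨m.π.trans hrx hxy, by simp [hx0, hne.symm]⟩
        refine ⟨(SimpleGraph.Walk.cons (Or.inr (Or.inr ⟨rfl, rfl⟩)) SimpleGraph.Walk.nil).copy
          (Quotient.sound hx0y).symm (congrArg (Quotient.mk (πP m x)) hy0).symm, ?_⟩
        intro q hq
        erw [SimpleGraph.Walk.support_copy, SimpleGraph.Walk.support_cons,
          SimpleGraph.Walk.support_nil] at hq
        rcases List.mem_cons.mp hq with rfl | hq'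
        · have h1 : (πP m x).r (Quotient.mk (πP m x) y).out y :=
            Quotient.exact (Quotient.out_eq _)
          exact m.π.trans h1.1 (m.π.trans (m.π.symm hxy) (m.π.symm hrx))
        · erw [List.mem_singleton] at hq'
          subst hq'
          have h1 : (πP m x).r (Quotient.mk (πP m x) x).out x :=
            Quotient.exact (Quotient.out_eq _)
          exact m.π.trans h1.1 (m.π.symm hrx)

theorem not_le_pendant : ¬ MLT.le (tP m x y hxy hne) m := by
  intro h
  have := h.1 hxy
  exact hne.symm ((this : (πP m x).r x y).2.mp rfl)

theorem exists_gt (hxy' : m.π.r x y) (hne' : x ≠ y) :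
    ∃ t' : MLT n, MLT.le m t' ∧ ¬ MLT.le t' m :=
  ⟨tP m x y hxy' hne', le_pendant m x y hxy' hne', not_le_pendant m x y hxy' hne'⟩

end Pendant

end Stmt19


/-- the maximal elements of the poset `MLT(n)` of multilabeled trees on
`{1,…,n}` are exactly those with all blocks singletons (`π = ⊥`), i.e. the labeled trees
on `{1,…,n}`; and for each such maximal element `m`, the maximal interval below `m`
(which is all of `{t // t ≤ m}`, since the one-block tree is the least element) is
isomorphic as a poset to the Boolean lattice of subsets of the edge set `E(m)` of the
corresponding labeled tree, which has `n − 1` elements. -/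
theorem stmt_19 (n : ℕ) (hn : 1 ≤ n) :
    (∀ m : MLT n, (∀ t : MLT n, MLT.le m t → MLT.le t m) ↔ m.π = ⊥) ∧
    (∀ m : MLT n, m.π = ⊥ →
      Nat.card m.G.edgeSet = n - 1 ∧
      ∃ e : {t : MLT n // MLT.le t m} ≃ Set m.G.edgeSet,
        ∀ a b : {t : MLT n // MLT.le t m},
          MLT.le a.val b.val ↔ e a ⊆ e b) := by
  constructor
  · intro m
    constructor
    · intro hmax
      by_contra hb
      have hex : ∃ a b : Fin n, m.π.r a b ∧ a ≠ b := by
        by_contra h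
        push_neg at h
        apply hb
        apply Setoid.ext
        intro a b
        exact ⟨fun hr => h a b hr, fun he => he ▸ m.π.refl a⟩
      obtain ⟨a, b, hr, hne⟩ := hex
      obtain ⟨t', hmt', hnot⟩ := Stmt19.exists_gt m a b hr hne
      exact hnot (hmax t' hmt')
    · intro hm t hmt
      exact Stmt19.max_of_bot hm t hmt
  · intro m hm
    refine ⟨Stmt19.card_edges hm, ?_⟩
    have hbij : Function.Bijective
        (fun t : {t : MLT n // MLT.le t m} => Stmt19.fS m t.val) := by
      constructor
      · intro t1 t2 h
        exact Subtype.ext (Stmt19.fS_inj hm t1.2 t2.2 h)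
      · intro S
        exact ⟨⟨Stmt19.tS hm hn S, Stmt19.le_tS hm hn S⟩, Stmt19.fS_tS hm hn S⟩
    refine ⟨Equiv.ofBijective _ hbij, ?_⟩
    intro a b
    rw [Stmt19.le_iff_subset hm a.2 b.2]
    rfl
end
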